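/- Suppose p, k, q : X × X → ℝ are measurable, positive functions, μ is a probability measure on X × X, and E_μ[(r(p) − r(k))^2] ≤ 2ε where r(p) = p/(p+q) pointwise. Then E_μ|p − k| ≤ sqrt(2ε) · sqrt(E_μ[(max{p,k} + q)^4 / q^2]). -/
import Mathlib


open MeasureTheory

/-- Cauchy–Schwarz for real integrals, via the discriminant trick. -/
lemma cs_integral {α : Type*} [MeasurableSpace α] (μ : Measure α)
    (f g : α → ℝ) (hf : AEStronglyMeasurable f μ) (hg : AEStronglyMeasurable g μ)
    (hf2 : Integrable (fun z => f z ^ 2) μ) (hg2 : Integrable (fun z => g z ^ 2) μ) :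
    ∫ z, f z * g z ∂μ
      ≤ Real.sqrt (∫ z, f z ^ 2 ∂μ) * Real.sqrt (∫ z, g z ^ 2 ∂μ) := by
  have hfg : Integrable (fun z => f z * g z) μ := by
    refine ((hf2.add hg2).div_const 2).mono (hf.mul hg) ?_
    filter_upwards with z
    simp only [Pi.add_apply, Real.norm_eq_abs, abs_mul]
    rw [abs_of_nonneg (by positivity : (0:ℝ) ≤ (f z ^ 2 + g z ^ 2) / 2)]
    nlinarith [abs_nonneg (f z), abs_nonneg (g z), sq_abs (f z), sq_abs (g z),
      sq_nonneg (|f z| - |g z|)]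
  set A := ∫ z, f z ^ 2 ∂μ with hA
  set B := ∫ z, f z * g z ∂μ with hB
  set C := ∫ z, g z ^ 2 ∂μ with hC
  have hA0 : 0 ≤ A := integral_nonneg fun z => sq_nonneg _
  have hC0 : 0 ≤ C := integral_nonneg fun z => sq_nonneg _
  have key : ∀ t : ℝ, 0 ≤ A * (t * t) + (-2 * B) * t + C := by
    intro t
    have hnn : 0 ≤ ∫ z, (t * f z - g z) ^ 2 ∂μ := integral_nonneg fun z => sq_nonneg _
    have hexp : (fun z => (t * f z - g z) ^ 2)
        = fun z => t ^ 2 * f z ^ 2 - 2 * t * (f z * g z) + g z ^ 2 := by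
      funext z; ring
    rw [hexp] at hnn
    have hI1 : Integrable (fun z => t ^ 2 * f z ^ 2 - 2 * t * (f z * g z)) μ := by
      exact (hf2.const_mul _).sub (hfg.const_mul _)
    have hI2 : Integrable (fun z => t ^ 2 * f z ^ 2) μ := hf2.const_mul _
    have hI3 : Integrable (fun z => 2 * t * (f z * g z)) μ := hfg.const_mul _
    rw [integral_add hI1 hg2, integral_sub hI2 hI3,
      integral_const_mul, integral_const_mul] at hnn
    nlinarith [hnn]
  have hd := discrim_le_zero key
  rw [discrim] at hd
  have hBsq : B ^ 2 ≤ A * C := by nlinarith [hd]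
  calc B ≤ |B| := le_abs_self B
    _ = Real.sqrt (B ^ 2) := (Real.sqrt_sq_eq_abs B).symm
    _ ≤ Real.sqrt (A * C) := Real.sqrt_le_sqrt hBsq
    _ = Real.sqrt A * Real.sqrt C := Real.sqrt_mul hA0 C

theorem tv_type_bound {X : Type*} [MeasurableSpace X]
    (μ : Measure (X × X)) [IsProbabilityMeasure μ]
    (p k q : X × X → ℝ) (hp : Measurable p) (hk : Measurable k) (hq : Measurable q)
    (hp_pos : ∀ z, 0 < p z) (hk_pos : ∀ z, 0 < k z) (hq_pos : ∀ z, 0 < q z)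
    (ε : ℝ)
    (hrisk_int : Integrable
      (fun z => (p z / (p z + q z) - k z / (k z + q z)) ^ 2) μ)
    (hw_int : Integrable (fun z => (max (p z) (k z) + q z) ^ 4 / (q z) ^ 2) μ)
    (hrisk : ∫ z, (p z / (p z + q z) - k z / (k z + q z)) ^ 2 ∂μ ≤ 2 * ε) :
    ∫ z, |p z - k z| ∂μ
      ≤ Real.sqrt (2 * ε)
        * Real.sqrt (∫ z, (max (p z) (k z) + q z) ^ 4 / (q z) ^ 2 ∂μ) := by
  set f : X × X → ℝ := fun z => |p z / (p z + q z) - k z / (k z + q z)| with hf_def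
  set g : X × X → ℝ := fun z => (max (p z) (k z) + q z) ^ 2 / q z with hg_def
  have hfm : Measurable f := by
    apply Measurable.abs
    exact ((hp.div (hp.add hq)).sub (hk.div (hk.add hq)))
  have hgm : Measurable g := (((hp.max hk).add hq).pow_const 2).div hq
  have hf2 : Integrable (fun z => f z ^ 2) μ := by
    simpa [hf_def, sq_abs] using hrisk_int
  have hg2 : Integrable (fun z => g z ^ 2) μ := by
    have : (fun z => g z ^ 2) = fun z => (max (p z) (k z) + q z) ^ 4 / (q z) ^ 2 := by
      funext z; rw [hg_def]; rw [div_pow]; ring_nf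
    rw [this]; exact hw_int
  -- pointwise bound
  have hpt : ∀ z, |p z - k z| ≤ f z * g z := by
    intro z
    have hpq : 0 < p z + q z := by have := hp_pos z; have := hq_pos z; linarith
    have hkq : 0 < k z + q z := by have := hk_pos z; have := hq_pos z; linarith
    have hq0 : 0 < q z := hq_pos z
    have hdiff : p z / (p z + q z) - k z / (k z + q z)
        = q z * (p z - k z) / ((p z + q z) * (k z + q z)) := by
      field_simp; ring
    have hfz : f z = q z * |p z - k z| / ((p z + q z) * (k z + q z)) := by
      show |p z / (p z + q z) - k z / (k z + q z)| = _
      rw [hdiff, abs_div, abs_mul, abs_of_pos hq0, abs_of_pos (mul_pos hpq hkq)]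
    have hgz : g z = (max (p z) (k z) + q z) ^ 2 / q z := rfl
    rw [hfz, hgz, div_mul_div_comm, le_div_iff₀ (by positivity)]
    have h1 : (p z + q z) * (k z + q z) ≤ (max (p z) (k z) + q z) ^ 2 := by
      have h2 := le_max_left (p z) (k z)
      have h3 := le_max_right (p z) (k z)
      nlinarith [hq0.le, hpq.le, hkq.le]
    nlinarith [mul_nonneg (mul_nonneg hq0.le (abs_nonneg (p z - k z)))
      (sub_nonneg.mpr h1)]
  have hfg_int : Integrable (fun z => f z * g z) μ := by
    refine ((hf2.add hg2).div_const 2).mono ((hfm.mul hgm).aestronglyMeasurable) ?_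
    filter_upwards with z
    simp only [Pi.add_apply, Real.norm_eq_abs, abs_mul]
    rw [abs_of_nonneg (by positivity : (0:ℝ) ≤ (f z ^ 2 + g z ^ 2) / 2)]
    nlinarith [abs_nonneg (f z), abs_nonneg (g z), sq_abs (f z), sq_abs (g z),
      sq_nonneg (|f z| - |g z|)]
  have habs_int : Integrable (fun z => |p z - k z|) μ := by
    refine hfg_int.mono ((hp.sub hk).abs.aestronglyMeasurable) ?_
    filter_upwards with z
    rw [Real.norm_eq_abs, abs_abs, Real.norm_eq_abs]
    refine (hpt z).trans (le_abs_self _)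
  have step1 : ∫ z, |p z - k z| ∂μ ≤ ∫ z, f z * g z ∂μ :=
    integral_mono habs_int hfg_int hpt
  have step2 := cs_integral μ f g hfm.aestronglyMeasurable hgm.aestronglyMeasurable hf2 hg2
  have step3 : Real.sqrt (∫ z, f z ^ 2 ∂μ) ≤ Real.sqrt (2 * ε) := by
    apply Real.sqrt_le_sqrt
    calc ∫ z, f z ^ 2 ∂μ = ∫ z, (p z / (p z + q z) - k z / (k z + q z)) ^ 2 ∂μ := by
          simp [hf_def, sq_abs]
      _ ≤ 2 * ε := hrisk
  have hg2eq : ∫ z, g z ^ 2 ∂μ = ∫ z, (max (p z) (k z) + q z) ^ 4 / (q z) ^ 2 ∂μ := by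
    congr 1; funext z; rw [hg_def, div_pow]; ring_nf
  calc ∫ z, |p z - k z| ∂μ ≤ ∫ z, f z * g z ∂μ := step1
    _ ≤ Real.sqrt (∫ z, f z ^ 2 ∂μ) * Real.sqrt (∫ z, g z ^ 2 ∂μ) := step2
    _ ≤ Real.sqrt (2 * ε) * Real.sqrt (∫ z, g z ^ 2 ∂μ) := by
        apply mul_le_mul_of_nonneg_right step3 (Real.sqrt_nonneg _)
    _ = Real.sqrt (2 * ε) * Real.sqrt (∫ z, (max (p z) (k z) + q z) ^ 4 / (q z) ^ 2 ∂μ) := by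
        rw [hg2eq]
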